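/- Let g : [0,1] → ℝ be continuous with g ≥ k > 0, and G(x) = ∫_0^x g(s) ds. Then for each fixed x ∈ (0,1], the ratio (∫_0^x e^{G(s)/h} ds) / (h·e^{G(x)/h}) converges to 1/g(x) as h → 0⁺. -/

import Mathlib

open Real MeasureTheory intervalIntegral Filter

lemma exp_int (c b δ : ℝ) (hc : 0 < c) :
    ∫ s in (b - δ)..b, Real.exp (c * (s - b)) = (1 - Real.exp (-(c * δ))) / c := by
  have hderiv : ∀ s ∈ Set.uIcc (b - δ) b,
      HasDerivAt (fun s => Real.exp (c * (s - b)) / c) (Real.exp (c * (s - b))) s := by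
    intro s _
    have h1 : HasDerivAt (fun s : ℝ => c * (s - b)) c s := by
      simpa using (((hasDerivAt_id s).sub_const b).const_mul c)
    have h2 := (h1.exp).div_const c
    simpa [mul_div_assoc, div_self hc.ne'] using h2
  have hint : IntervalIntegrable (fun s => Real.exp (c * (s - b))) volume (b - δ) b :=
    (Real.continuous_exp.comp (by continuity)).intervalIntegrable _ _
  rw [integral_eq_sub_of_hasDerivAt hderiv hint]
  simp only [sub_self, mul_zero, Real.exp_zero]
  ring_nf

lemma exp_tendsto (c : ℝ) (hc : 0 < c) :
    Tendsto (fun h : ℝ => Real.exp (-(c / h))) (nhdsWithin 0 (Set.Ioi 0)) (nhds 0) := by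
  have h1 : Tendsto (fun h : ℝ => c / h) (nhdsWithin 0 (Set.Ioi 0)) atTop := by
    simpa [div_eq_mul_inv] using tendsto_inv_nhdsGT_zero.const_mul_atTop hc
  exact Real.tendsto_exp_atBot.comp (tendsto_neg_atTop_atBot.comp h1)

lemma tail_tendsto (c : ℝ) (hc : 0 < c) :
    Tendsto (fun h : ℝ => Real.exp (-(c / h)) / h) (nhdsWithin 0 (Set.Ioi 0)) (nhds 0) := by
  have h1 : Tendsto (fun h : ℝ => c / h) (nhdsWithin 0 (Set.Ioi 0)) atTop := by
    simpa [div_eq_mul_inv] using tendsto_inv_nhdsGT_zero.const_mul_atTop hc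
  have h2 := ((Real.tendsto_pow_mul_exp_neg_atTop_nhds_zero 1).comp h1).const_mul (1/c)
  rw [mul_zero] at h2
  refine h2.congr' ?_
  filter_upwards [self_mem_nhdsWithin] with h hh
  have hh : (0:ℝ) < h := hh
  simp only [Function.comp_apply, pow_one]
  field_simp

set_option maxHeartbeats 2000000

theorem stmt6 (g : ℝ → ℝ) (k : ℝ) (hk : 0 < k)
    (hg : ContinuousOn g (Set.Icc 0 1)) (hgk : ∀ x ∈ Set.Icc (0:ℝ) 1, k ≤ g x)
    (G : ℝ → ℝ) (hG : ∀ x, G x = ∫ s in (0:ℝ)..x, g s)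
    (x : ℝ) (hx : x ∈ Set.Ioc (0:ℝ) 1) :
    Tendsto (fun h : ℝ => (∫ s in (0:ℝ)..x, Real.exp (G s / h)) / (h * Real.exp (G x / h)))
      (nhdsWithin 0 (Set.Ioi 0)) (nhds (1 / g x)) := by
  obtain ⟨hx0, hx1⟩ := hx
  have hxm : x ∈ Set.Icc (0:ℝ) 1 := ⟨hx0.le, hx1⟩
  have h0m : (0:ℝ) ∈ Set.Icc (0:ℝ) 1 := ⟨le_refl 0, zero_le_one⟩
  have hgx : 0 < g x := lt_of_lt_of_le hk (hgk x hxm)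
  have hgint : ∀ a b : ℝ, a ∈ Set.Icc (0:ℝ) 1 → b ∈ Set.Icc (0:ℝ) 1 →
      IntervalIntegrable g volume a b := fun a b ha hb =>
    (hg.mono (Set.uIcc_subset_Icc ha hb)).intervalIntegrable
  have hGc : ContinuousOn G (Set.Icc (0:ℝ) 1) := by
    have h1 : IntegrableOn g (Set.uIcc (0:ℝ) 1) := by
      rw [Set.uIcc_of_le zero_le_one]; exact hg.integrableOn_Icc
    have h2 := intervalIntegral.continuousOn_primitive_interval h1
    rw [Set.uIcc_of_le zero_le_one] at h2
    exact h2.congr (fun s _ => hG s)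
  have hGdiff : ∀ s ∈ Set.Icc 0 x, G x - G s = ∫ t in s..x, g t := by
    intro s hs
    have hs1 : s ∈ Set.Icc (0:ℝ) 1 := ⟨hs.1, hs.2.trans hx1⟩
    rw [hG, hG]
    exact integral_interval_sub_left (hgint 0 x h0m hxm) (hgint 0 s h0m hs1)
  have hlowk : ∀ s ∈ Set.Icc 0 x, k * (x - s) ≤ G x - G s := by
    intro s hs
    have hs1 : s ∈ Set.Icc (0:ℝ) 1 := ⟨hs.1, hs.2.trans hx1⟩
    rw [hGdiff s hs]
    have h1 : (∫ _ in s..x, k) ≤ ∫ t in s..x, g t := by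
      apply integral_mono_on hs.2 intervalIntegrable_const (hgint s x hs1 hxm)
      intro t ht; exact hgk t ⟨hs.1.trans ht.1, ht.2.trans hx1⟩
    rw [intervalIntegral.integral_const, smul_eq_mul] at h1
    linarith [h1, mul_comm k (x - s)]
  have hcont : ∀ ε > 0, ∃ δ > 0, ∀ s ∈ Set.Icc (0:ℝ) 1, |s - x| < δ → |g s - g x| < ε := by
    intro ε hε
    obtain ⟨δ, hδ, hδ'⟩ := Metric.continuousWithinAt_iff.1 (hg x hxm) ε hε
    exact ⟨δ, hδ, fun s hs hsd => by
      simpa [Real.dist_eq] using hδ' hs (by simpa [Real.dist_eq] using hsd)⟩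
  have hJint : ∀ (h : ℝ) (a b : ℝ), a ∈ Set.Icc (0:ℝ) 1 → b ∈ Set.Icc (0:ℝ) 1 →
      IntervalIntegrable (fun s => Real.exp ((G s - G x)/h)) volume a b := by
    intro h a b ha hb
    apply ContinuousOn.intervalIntegrable
    apply ContinuousOn.mono _ (Set.uIcc_subset_Icc ha hb)
    exact Real.continuous_exp.comp_continuousOn ((hGc.sub continuousOn_const).div_const h)
  have key : ∀ h : ℝ, 0 < h →
      (∫ s in (0:ℝ)..x, Real.exp (G s / h)) / (h * Real.exp (G x / h))
        = (1/h) * ∫ s in (0:ℝ)..x, Real.exp ((G s - G x) / h) := by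
    intro h hh
    have h1 : ∀ s, Real.exp ((G s - G x)/h) = Real.exp (G s / h) * Real.exp (-(G x / h)) := by
      intro s; rw [← Real.exp_add]; ring_nf
    simp_rw [h1]
    rw [intervalIntegral.integral_mul_const, Real.exp_neg]
    field_simp
  apply Tendsto.congr'
    (f₁ := fun h : ℝ => (1/h) * ∫ s in (0:ℝ)..x, Real.exp ((G s - G x)/h))
  · filter_upwards [self_mem_nhdsWithin] with h hh
    exact (key h hh).symm
  refine tendsto_order.2 ⟨?_, ?_⟩
  · -- lower bound branch
    intro a ha
    have hex : ∃ ε > 0, a < 1/(g x + ε) := by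
      rcases le_or_gt a 0 with hle | hpos
      · exact ⟨1, one_pos, lt_of_le_of_lt hle (by positivity)⟩
      · have h1 : a * g x < 1 := (lt_div_iff₀ hgx).1 ha
        have h2 : g x < 1/a := (lt_div_iff₀ hpos).2 (by nlinarith)
        refine ⟨(1/a - g x)/2, by linarith, ?_⟩
        have h3 : 0 < g x + (1/a - g x)/2 := by linarith
        rw [lt_div_iff₀ h3]
        have h4 := mul_lt_mul_of_pos_left (show g x + (1/a - g x)/2 < 1/a by linarith) hpos
        rwa [mul_one_div_cancel hpos.ne'] at h4
    obtain ⟨ε, hε, haε⟩ := hex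
    obtain ⟨δ, hδ, hδg⟩ := hcont ε hε
    set δ' := min (δ/2) x with hδ'def
    have hδ'0 : 0 < δ' := lt_min (by linarith) hx0
    have hδ'x : δ' ≤ x := min_le_right _ _
    have hδ'δ : δ' ≤ δ/2 := min_le_left _ _
    have hub : ∀ s ∈ Set.Icc (x - δ') x, G x - G s ≤ (g x + ε) * (x - s) := by
      intro s hs
      have hs0 : (0:ℝ) ≤ s := le_trans (by linarith) hs.1
      have hsx : s ∈ Set.Icc 0 x := ⟨hs0, hs.2⟩
      rw [hGdiff s hsx]
      have h2 : (∫ t in s..x, g t) ≤ ∫ _ in s..x, (g x + ε) := by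
        apply integral_mono_on hs.2 (hgint s x ⟨hs0, hs.2.trans hx1⟩ hxm)
          intervalIntegrable_const
        intro t ht
        have htm : t ∈ Set.Icc (0:ℝ) 1 := ⟨hs0.trans ht.1, ht.2.trans hx1⟩
        have habs : |t - x| < δ := by
          rw [abs_lt]; constructor <;> linarith [hs.1, ht.1, ht.2]
        have := (abs_lt.1 (hδg t htm habs)).2
        linarith
      rw [intervalIntegral.integral_const, smul_eq_mul] at h2
      linarith [h2, mul_comm (x - s) (g x + ε)]
    have hmain : ∀ h : ℝ, 0 < h →
        (1 - Real.exp (-((g x + ε) * δ' / h))) / (g x + ε)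
          ≤ (1/h) * ∫ s in (0:ℝ)..x, Real.exp ((G s - G x)/h) := by
      intro h hh
      set c := (g x + ε) / h with hc
      have hc0 : 0 < c := div_pos (by linarith) hh
      have hxδm : x - δ' ∈ Set.Icc (0:ℝ) 1 := ⟨by linarith, by linarith⟩
      have h1 : (∫ s in (x - δ')..x, Real.exp (c * (s - x)))
          ≤ ∫ s in (x - δ')..x, Real.exp ((G s - G x)/h) := by
        apply integral_mono_on (by linarith)
          ((Real.continuous_exp.comp (by continuity)).intervalIntegrable _ _)
          (hJint h (x - δ') x hxδm hxm)
        intro s hs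
        apply Real.exp_le_exp.2
        show c * (s - x) ≤ (G s - G x) / h
        rw [hc, div_mul_eq_mul_div, div_le_div_iff_of_pos_right hh]
        nlinarith [hub s hs]
      have hsplit : (∫ s in (0:ℝ)..x, Real.exp ((G s - G x)/h))
          = (∫ s in (0:ℝ)..(x - δ'), Real.exp ((G s - G x)/h))
            + ∫ s in (x - δ')..x, Real.exp ((G s - G x)/h) :=
        (integral_add_adjacent_intervals (hJint h 0 (x - δ') h0m hxδm)
          (hJint h (x - δ') x hxδm hxm)).symm
      have hpos : 0 ≤ ∫ s in (0:ℝ)..(x - δ'), Real.exp ((G s - G x)/h) :=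
        integral_nonneg (by linarith) (fun u _ => (Real.exp_pos _).le)
      have harg : -(c * δ') = -((g x + ε) * δ' / h) := by rw [hc]; ring
      calc (1 - Real.exp (-((g x + ε) * δ' / h))) / (g x + ε)
          = (1/h) * ((1 - Real.exp (-(c * δ'))) / c) := by
            rw [harg, hc]; field_simp
        _ = (1/h) * ∫ s in (x - δ')..x, Real.exp (c * (s - x)) := by
            rw [exp_int c x δ' hc0]
        _ ≤ (1/h) * ∫ s in (x - δ')..x, Real.exp ((G s - G x)/h) :=
            mul_le_mul_of_nonneg_left h1 (by positivity)
        _ ≤ (1/h) * ∫ s in (0:ℝ)..x, Real.exp ((G s - G x)/h) := by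
            apply mul_le_mul_of_nonneg_left _ (by positivity)
            rw [hsplit]; linarith
    have hL : Tendsto (fun h : ℝ => (1 - Real.exp (-((g x + ε) * δ' / h))) / (g x + ε))
        (nhdsWithin 0 (Set.Ioi 0)) (nhds (1/(g x + ε))) := by
      have h1 := ((tendsto_const_nhds (x := (1:ℝ))
        (f := nhdsWithin (0:ℝ) (Set.Ioi 0))).sub
        (exp_tendsto ((g x + ε) * δ') (by positivity))).div_const (g x + ε)
      simpa using h1
    filter_upwards [hL.eventually (eventually_gt_nhds haε), self_mem_nhdsWithin]
      with h h1 h2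
    exact lt_of_lt_of_le h1 (hmain h h2)
  · -- upper bound branch
    intro a ha
    set m := (1/g x + a)/2 with hm
    have hm1 : 1/g x < m := by rw [hm]; linarith
    have hm2 : m < a := by rw [hm]; linarith
    have hm0 : 0 < m := lt_trans (by positivity) hm1
    have hinv : (1:ℝ) < g x * m := by
      have h1 := mul_lt_mul_of_pos_left hm1 hgx
      rwa [mul_one_div_cancel hgx.ne'] at h1
    have h1m : 1/m < g x := (div_lt_iff₀ hm0).2 (by nlinarith)
    have h1m0 : 0 < 1/m := by positivity
    set ε := (g x - 1/m)/2 with hε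
    have hεpos : 0 < ε := by rw [hε]; linarith
    have hgxε : 0 < g x - ε := by rw [hε]; linarith
    have hgoal2 : 1/(g x - ε) < m := by
      rw [div_lt_iff₀ hgxε]
      have h2 : m * (1/m) = 1 := mul_one_div_cancel hm0.ne'
      rw [hε]; nlinarith
    obtain ⟨δ, hδ, hδg⟩ := hcont ε hεpos
    set δ' := min (δ/2) x with hδ'def
    have hδ'0 : 0 < δ' := lt_min (by linarith) hx0
    have hδ'x : δ' ≤ x := min_le_right _ _
    have hδ'δ : δ' ≤ δ/2 := min_le_left _ _
    have hlb : ∀ s ∈ Set.Icc (x - δ') x, (g x - ε) * (x - s) ≤ G x - G s := by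
      intro s hs
      have hs0 : (0:ℝ) ≤ s := le_trans (by linarith) hs.1
      have hsx : s ∈ Set.Icc 0 x := ⟨hs0, hs.2⟩
      rw [hGdiff s hsx]
      have h2 : (∫ _ in s..x, (g x - ε)) ≤ ∫ t in s..x, g t := by
        apply integral_mono_on hs.2 intervalIntegrable_const
          (hgint s x ⟨hs0, hs.2.trans hx1⟩ hxm)
        intro t ht
        have htm : t ∈ Set.Icc (0:ℝ) 1 := ⟨hs0.trans ht.1, ht.2.trans hx1⟩
        have habs : |t - x| < δ := by
          rw [abs_lt]; constructor <;> linarith [hs.1, ht.1, ht.2]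
        have := (abs_lt.1 (hδg t htm habs)).1
        linarith
      rw [intervalIntegral.integral_const, smul_eq_mul] at h2
      linarith [h2, mul_comm (x - s) (g x - ε)]
    have htail : ∀ s ∈ Set.Icc (0:ℝ) (x - δ'), k * δ' ≤ G x - G s := by
      intro s hs
      have h1 := hlowk s ⟨hs.1, by linarith [hs.2]⟩
      nlinarith [hs.2]
    have hmain : ∀ h : ℝ, 0 < h →
        (1/h) * (∫ s in (0:ℝ)..x, Real.exp ((G s - G x)/h))
          ≤ (x - δ') * Real.exp (-(k * δ' / h)) / h + 1/(g x - ε) := by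
      intro h hh
      set c := (g x - ε) / h with hc
      have hc0 : 0 < c := div_pos hgxε hh
      have hxδm : x - δ' ∈ Set.Icc (0:ℝ) 1 := ⟨by linarith, by linarith⟩
      have hT : (∫ s in (0:ℝ)..(x - δ'), Real.exp ((G s - G x)/h))
          ≤ (x - δ') * Real.exp (-(k * δ' / h)) := by
        have h2 : (∫ s in (0:ℝ)..(x - δ'), Real.exp ((G s - G x)/h))
            ≤ ∫ _ in (0:ℝ)..(x - δ'), Real.exp (-(k * δ' / h)) := by
          apply integral_mono_on (by linarith) (hJint h 0 (x - δ') h0m hxδm)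
            intervalIntegrable_const
          intro s hs
          apply Real.exp_le_exp.2
          rw [show -(k * δ' / h) = -(k * δ') / h by ring, div_le_div_iff_of_pos_right hh]
          linarith [htail s hs]
        rw [intervalIntegral.integral_const, smul_eq_mul, sub_zero] at h2
        exact h2
      have hN : (∫ s in (x - δ')..x, Real.exp ((G s - G x)/h)) ≤ h / (g x - ε) := by
        have h2 : (∫ s in (x - δ')..x, Real.exp ((G s - G x)/h))
            ≤ ∫ s in (x - δ')..x, Real.exp (c * (s - x)) := by
          apply integral_mono_on (by linarith) (hJint h (x - δ') x hxδm hxm)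
            ((Real.continuous_exp.comp (by continuity)).intervalIntegrable _ _)
          intro s hs
          apply Real.exp_le_exp.2
          show (G s - G x) / h ≤ c * (s - x)
          rw [hc, div_mul_eq_mul_div, div_le_div_iff_of_pos_right hh]
          nlinarith [hlb s hs]
        rw [exp_int c x δ' hc0] at h2
        have h3 : (1 - Real.exp (-(c * δ'))) / c ≤ 1 / c :=
          (div_le_div_iff_of_pos_right hc0).2 (by linarith [Real.exp_pos (-(c * δ'))])
        have h4 : 1 / c = h / (g x - ε) := by rw [hc, one_div_div]
        linarith
      have hsplit : (∫ s in (0:ℝ)..x, Real.exp ((G s - G x)/h))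
          = (∫ s in (0:ℝ)..(x - δ'), Real.exp ((G s - G x)/h))
            + ∫ s in (x - δ')..x, Real.exp ((G s - G x)/h) :=
        (integral_add_adjacent_intervals (hJint h 0 (x - δ') h0m hxδm)
          (hJint h (x - δ') x hxδm hxm)).symm
      rw [hsplit]
      calc (1/h) * ((∫ s in (0:ℝ)..(x - δ'), Real.exp ((G s - G x)/h))
            + ∫ s in (x - δ')..x, Real.exp ((G s - G x)/h))
          ≤ (1/h) * ((x - δ') * Real.exp (-(k * δ' / h)) + h / (g x - ε)) :=
            mul_le_mul_of_nonneg_left (add_le_add hT hN) (by positivity)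
        _ = (x - δ') * Real.exp (-(k * δ' / h)) / h + 1/(g x - ε) := by
            field_simp
    have hTt : Tendsto (fun h : ℝ => (x - δ') * Real.exp (-(k * δ' / h)) / h)
        (nhdsWithin 0 (Set.Ioi 0)) (nhds 0) := by
      have h1 := (tail_tendsto (k * δ') (by positivity)).const_mul (x - δ')
      rw [mul_zero] at h1
      exact h1.congr (fun h => by ring)
    filter_upwards [hTt.eventually (eventually_lt_nhds (show (0:ℝ) < a - m by linarith)),
      self_mem_nhdsWithin] with h h1 h2
    calc (1/h) * ∫ s in (0:ℝ)..x, Real.exp ((G s - G x)/h)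
        ≤ (x - δ') * Real.exp (-(k * δ' / h)) / h + 1/(g x - ε) := hmain h h2
      _ < (a - m) + m := add_lt_add h1 hgoal2
      _ = a := by ring
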